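/- In a complete Busemann convex geodesic space that is additionally δ-hyperbolic, every closed and convex set that is geodesically bounded is directionally bounded. -/

import Mathlib

open Set Filter Metric

section Defs

variable {X : Type*} [MetricSpace X]

/-- A unit-speed geodesic defined on `[a, b]`. -/
def IsGeodesicOn (γ : ℝ → X) (a b : ℝ) : Prop :=
  ∀ s ∈ Set.Icc a b, ∀ t ∈ Set.Icc a b, dist (γ s) (γ t) = |s - t|

/-- `S` is a geodesic segment joining `x` and `y`. -/
def IsGeodesicSegment (S : Set X) (x y : X) : Prop :=
  ∃ (a b : ℝ) (γ : ℝ → X), a ≤ b ∧ IsGeodesicOn γ a b ∧ γ a = x ∧ γ b = y ∧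
    S = γ '' Set.Icc a b

/-- A geodesic space: every two points are joined by a geodesic segment. -/
def GeodesicSpace (X : Type*) [MetricSpace X] : Prop :=
  ∀ x y : X, ∃ S : Set X, IsGeodesicSegment S x y

/-- A uniquely geodesic space. -/
def UniquelyGeodesic (X : Type*) [MetricSpace X] : Prop :=
  ∀ x y : X, ∃! S : Set X, IsGeodesicSegment S x y

/-- `S` is contained in the closed `M`-neighborhood of `T`. -/
def InClosedNbhd (S T : Set X) (M : ℝ) : Prop :=
  ∀ p ∈ S, ∃ q ∈ T, dist p q ≤ M

/-- A triangle with sides `S1, S2, S3` is `M`-slim. -/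
def SlimTriangle (S1 S2 S3 : Set X) (M : ℝ) : Prop :=
  InClosedNbhd S1 (S2 ∪ S3) M ∧ InClosedNbhd S2 (S1 ∪ S3) M ∧ InClosedNbhd S3 (S1 ∪ S2) M

/-- `X` is `δ`-hyperbolic: every geodesic triangle is `δ`-slim. -/
def DeltaHyperbolic (X : Type*) [MetricSpace X] (δ : ℝ) : Prop :=
  ∀ x y z : X, ∀ S1 S2 S3 : Set X,
    IsGeodesicSegment S1 x y → IsGeodesicSegment S2 y z → IsGeodesicSegment S3 z x →
    SlimTriangle S1 S2 S3 δ

/-- A geodesic ray `γ : [0, ∞) → X`. -/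
def IsGeodesicRay (γ : ℝ → X) : Prop :=
  ∀ s ∈ Set.Ici (0:ℝ), ∀ t ∈ Set.Ici (0:ℝ), dist (γ s) (γ t) = |s - t|

/-- A set is geodesically bounded if it contains no geodesic ray. -/
def GeodesicallyBounded (A : Set X) : Prop :=
  ¬ ∃ γ : ℝ → X, IsGeodesicRay γ ∧ ∀ t ∈ Set.Ici (0:ℝ), γ t ∈ A

/-- A directional curve `γ : [0, ∞) → X` (with some constant `b ≥ 0`). -/
def IsDirectionalCurve (γ : ℝ → X) : Prop :=
  ∃ b : ℝ, 0 ≤ b ∧ ∀ s ∈ Set.Ici (0:ℝ), ∀ t ∈ Set.Ici (0:ℝ),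
    |s - t| - b ≤ dist (γ s) (γ t) ∧ dist (γ s) (γ t) ≤ |s - t|

/-- A set is directionally bounded if it contains no directional curve. -/
def DirectionallyBounded (A : Set X) : Prop :=
  ¬ ∃ γ : ℝ → X, IsDirectionalCurve γ ∧ ∀ t ∈ Set.Ici (0:ℝ), γ t ∈ A

/-- A subset of a geodesic space is convex if every geodesic segment joining two of its
points is contained in it. -/
def GeodesicConvex (A : Set X) : Prop :=
  ∀ x ∈ A, ∀ y ∈ A, ∀ S : Set X, IsGeodesicSegment S x y → S ⊆ A

/-- The comparison point in the Euclidean plane: the point on the segment from `x'` to `y'`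
(of length `L`) at distance `t` from `x'`. -/
noncomputable def cmpPt (x' y' : EuclideanSpace ℝ (Fin 2)) (L t : ℝ) :
    EuclideanSpace ℝ (Fin 2) :=
  AffineMap.lineMap x' y' (t / L)

/-- `X` is a CAT(0) space: it is geodesic and for every geodesic triangle and every
comparison triangle in the Euclidean plane, distances between points on the triangle are
bounded by the distances between the corresponding comparison points. -/
def CAT0Space (X : Type*) [MetricSpace X] : Prop :=
  GeodesicSpace X ∧
  ∀ (x y z : X) (γ1 γ2 γ3 : ℝ → X),
    IsGeodesicOn γ1 0 (dist x y) → γ1 0 = x → γ1 (dist x y) = y →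
    IsGeodesicOn γ2 0 (dist y z) → γ2 0 = y → γ2 (dist y z) = z →
    IsGeodesicOn γ3 0 (dist z x) → γ3 0 = z → γ3 (dist z x) = x →
    ∀ x' y' z' : EuclideanSpace ℝ (Fin 2),
      dist x' y' = dist x y → dist y' z' = dist y z → dist z' x' = dist z x →
      (∀ s ∈ Set.Icc (0:ℝ) (dist x y), ∀ t ∈ Set.Icc (0:ℝ) (dist y z),
        dist (γ1 s) (γ2 t) ≤ dist (cmpPt x' y' (dist x y) s) (cmpPt y' z' (dist y z) t)) ∧
      (∀ s ∈ Set.Icc (0:ℝ) (dist y z), ∀ t ∈ Set.Icc (0:ℝ) (dist z x),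
        dist (γ2 s) (γ3 t) ≤ dist (cmpPt y' z' (dist y z) s) (cmpPt z' x' (dist z x) t)) ∧
      (∀ s ∈ Set.Icc (0:ℝ) (dist z x), ∀ t ∈ Set.Icc (0:ℝ) (dist x y),
        dist (γ3 s) (γ1 t) ≤ dist (cmpPt z' x' (dist z x) s) (cmpPt x' y' (dist x y) t))

/-- Busemann convexity. -/
def BusemannConvex (X : Type*) [MetricSpace X] : Prop :=
  GeodesicSpace X ∧
  ∀ (a b c d : ℝ) (γ σ : ℝ → X), a ≤ b → c ≤ d →
    IsGeodesicOn γ a b → IsGeodesicOn σ c d →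
    ∀ t ∈ Set.Icc (0:ℝ) 1,
      dist (γ ((1-t)*a + t*b)) (σ ((1-t)*c + t*d)) ≤
        (1-t) * dist (γ a) (σ c) + t * dist (γ b) (σ d)

/-- A `(lam, eps)`-quasi-geodesic defined on `[a, b]`. -/
def IsQuasiGeodesicOn (lam eps : ℝ) (γ : ℝ → X) (a b : ℝ) : Prop :=
  ∀ s ∈ Set.Icc a b, ∀ t ∈ Set.Icc a b,
    (1/lam) * |s - t| - eps ≤ dist (γ s) (γ t) ∧ dist (γ s) (γ t) ≤ lam * |s - t| + eps

/-- A `(lam, eps)`-quasi-geodesic ray. -/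
def IsQuasiGeodesicRay (lam eps : ℝ) (γ : ℝ → X) : Prop :=
  ∀ s ∈ Set.Ici (0:ℝ), ∀ t ∈ Set.Ici (0:ℝ),
    (1/lam) * |s - t| - eps ≤ dist (γ s) (γ t) ∧ dist (γ s) (γ t) ≤ lam * |s - t| + eps

/-- A `k`-local `lam`-quasi-geodesic ray: a `(lam, eps)`-quasi-geodesic ray locally,
for every `eps > 0`. -/
def IsLocalQuasiGeodesicRay (k lam : ℝ) (γ : ℝ → X) : Prop :=
  ∀ eps > (0:ℝ), ∀ s ∈ Set.Ici (0:ℝ), ∀ t ∈ Set.Ici (0:ℝ), |s - t| ≤ k →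
    (1/lam) * |s - t| - eps ≤ dist (γ s) (γ t) ∧ dist (γ s) (γ t) ≤ lam * |s - t| + eps

/-- `S` is the image of a `lam`-quasi-geodesic joining `x` and `y`
(i.e. a `(lam, eps)`-quasi-geodesic for every `eps > 0`). -/
def IsQuasiGeodesicSegment (lam : ℝ) (S : Set X) (x y : X) : Prop :=
  ∃ (a b : ℝ) (γ : ℝ → X), a ≤ b ∧ (∀ eps > (0:ℝ), IsQuasiGeodesicOn lam eps γ a b) ∧
    γ a = x ∧ γ b = y ∧ S = γ '' Set.Icc a b

/-- Every `lam`-quasi-geodesic triangle in `X` is `M`-slim. -/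
def QuasiGeodesicTrianglesSlim (X : Type*) [MetricSpace X] (lam M : ℝ) : Prop :=
  ∀ x y z : X, ∀ S1 S2 S3 : Set X,
    IsQuasiGeodesicSegment lam S1 x y → IsQuasiGeodesicSegment lam S2 y z →
    IsQuasiGeodesicSegment lam S3 z x → SlimTriangle S1 S2 S3 M

/-- A play of the Lion-Man game in `A` with speed `D`. -/
def IsLionManPlay (A : Set X) (D : ℝ) (L M : ℕ → X) : Prop :=
  (∀ n, L n ∈ A) ∧ (∀ n, M n ∈ A) ∧
  (∀ n, ∃ S : Set X, IsGeodesicSegment S (L n) (M n) ∧ L (n+1) ∈ S) ∧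
  (∀ n, dist (L n) (L (n+1)) = min D (dist (L n) (M n))) ∧
  (∀ n, dist (M n) (M (n+1)) ≤ D)

/-- The lion wins a play if `d(L_{n+1}, M_n) → 0`. -/
def LionWins (L M : ℕ → X) : Prop :=
  Filter.Tendsto (fun n => dist (L (n+1)) (M n)) Filter.atTop (nhds 0)

/-- The lion always wins the Lion-Man game played in `A`. -/
def LionAlwaysWins (A : Set X) : Prop :=
  ∀ D > (0:ℝ), ∀ L M : ℕ → X, IsLionManPlay A D L M → LionWins L M

end Defs

private lemma isGeodesicOn_sub {X : Type*} [MetricSpace X] {g : ℝ → X} {a b a' b' : ℝ}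
    (h : IsGeodesicOn g a b) (ha : a ≤ a') (hb : b' ≤ b) : IsGeodesicOn g a' b' :=
  fun s hs t ht => h s ⟨ha.trans hs.1, hs.2.trans hb⟩ t ⟨ha.trans ht.1, ht.2.trans hb⟩

private lemma geo_exists {X : Type*} [MetricSpace X] (hgs : GeodesicSpace X) (x y : X) :
    ∃ σ : ℝ → X, IsGeodesicOn σ 0 (dist x y) ∧ σ 0 = x ∧ σ (dist x y) = y ∧
      IsGeodesicSegment (σ '' Set.Icc 0 (dist x y)) x y ∧
      IsGeodesicSegment (σ '' Set.Icc 0 (dist x y)) y x := by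
  obtain ⟨S, a, c, g, hac, hg, hga, hgc, hS⟩ := hgs x y
  have hd : dist x y = c - a := by
    rw [← hga, ← hgc, hg a ⟨le_refl a, hac⟩ c ⟨hac, le_refl c⟩,
      abs_of_nonpos (by linarith)]
    ring
  set σ : ℝ → X := fun t => g (a + t) with hσdef
  have hσgeo : IsGeodesicOn σ 0 (dist x y) := by
    intro s hs t ht
    rw [hd] at hs ht
    have := hg (a + s) ⟨by linarith [hs.1], by linarith [hs.2]⟩
      (a + t) ⟨by linarith [ht.1], by linarith [ht.2]⟩
    simpa [add_sub_add_left_eq_sub] using this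
  have hσ0 : σ 0 = x := by simp [hσdef, hga]
  have hσL : σ (dist x y) = y := by
    have : a + dist x y = c := by rw [hd]; ring
    simp only [hσdef, this, hgc]
  have hfwd : IsGeodesicSegment (σ '' Set.Icc 0 (dist x y)) x y :=
    ⟨0, dist x y, σ, dist_nonneg, hσgeo, hσ0, hσL, rfl⟩
  refine ⟨σ, hσgeo, hσ0, hσL, hfwd, ?_⟩
  set L := dist x y
  have hL0 : (0:ℝ) ≤ L := dist_nonneg
  refine ⟨0, L, fun t => σ (L - t), hL0, ?_, by simpa using hσL, by simpa using hσ0, ?_⟩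
  · intro s hs t ht
    have := hσgeo (L - s) ⟨by linarith [hs.2], by linarith [hs.1]⟩
      (L - t) ⟨by linarith [ht.2], by linarith [ht.1]⟩
    rw [this, ← abs_neg]
    ring_nf
  · ext p
    constructor
    · rintro ⟨t, ht, rfl⟩
      exact ⟨L - t, ⟨by linarith [ht.2], by linarith [ht.1]⟩, by simp⟩
    · rintro ⟨t, ht, rfl⟩
      exact ⟨L - t, ⟨by linarith [ht.2], by linarith [ht.1]⟩, rfl⟩

private lemma seg_add {X : Type*} [MetricSpace X] {S : Set X} {u v : X}
    (hS : IsGeodesicSegment S u v) : ∀ q ∈ S, dist u q + dist q v = dist u v := by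
  obtain ⟨a, c, g, hac, hg, rfl, rfl, rfl⟩ := hS
  rintro q ⟨r, hr, rfl⟩
  have h1 : dist (g a) (g r) = r - a := by
    rw [hg a ⟨le_refl a, hac⟩ r hr, abs_of_nonpos (by linarith [hr.1])]; ring
  have h2 : dist (g r) (g c) = c - r := by
    rw [hg r hr c ⟨hac, le_refl c⟩, abs_of_nonpos (by linarith [hr.2])]; ring
  have h3 : dist (g a) (g c) = c - a := by
    rw [hg a ⟨le_refl a, hac⟩ c ⟨hac, le_refl c⟩, abs_of_nonpos (by linarith)]; ring
  rw [h1, h2, h3]; ring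

/-- In a complete Busemann convex space that is additionally `δ`-hyperbolic, every closed
and convex set that is geodesically bounded is directionally bounded. -/
theorem stmt7 {X : Type*} [MetricSpace X] [CompleteSpace X]
    (hB : BusemannConvex X) (δ : ℝ) (hδ : 0 ≤ δ) (hhyp : DeltaHyperbolic X δ)
    (A : Set X) (hclosed : IsClosed A) (hconv : GeodesicConvex A)
    (hgb : GeodesicallyBounded A) : DirectionallyBounded A := by
  rintro ⟨γ, ⟨b, hb0, hdir⟩, hγA⟩
  have hgs : GeodesicSpace X := hB.1
  set x0 : X := γ 0 with hx0
  have hx0A : x0 ∈ A := hγA 0 (Set.mem_Ici.mpr le_rfl)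
  choose σ hσgeo hσ0 hσend hseg hsegrev using fun n : ℕ => geo_exists hgs x0 (γ n)
  set L : ℕ → ℝ := fun n => dist x0 (γ n) with hLdef
  -- lower bound on L n
  have hLlb : ∀ n : ℕ, (n : ℝ) - b ≤ L n := by
    intro n
    have := (hdir 0 (Set.mem_Ici.mpr le_rfl) (n : ℝ) (Set.mem_Ici.mpr (Nat.cast_nonneg n))).1
    rw [abs_of_nonpos (by simp)] at this
    simpa using this
  have hL0 : ∀ n : ℕ, (0:ℝ) ≤ L n := fun n => dist_nonneg
  -- points on σ n are in A
  have hA : ∀ (n : ℕ) (t : ℝ), 0 ≤ t → t ≤ L n → σ n t ∈ A := by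
    intro n t ht0 htL
    exact hconv x0 hx0A (γ n) (hγA n (Set.mem_Ici.mpr (Nat.cast_nonneg n))) _ (hseg n)
      ⟨t, ⟨ht0, htL⟩, rfl⟩
  -- distance from x0 along σ n
  have hdist0 : ∀ (n : ℕ) (t : ℝ), 0 ≤ t → t ≤ L n → dist x0 (σ n t) = t := by
    intro n t ht0 htL
    rw [← hσ0 n]
    rw [hσgeo n 0 ⟨le_refl 0, hL0 n⟩ t ⟨ht0, htL⟩, abs_of_nonpos (by linarith)]
    ring
  -- hyperbolicity estimate
  have h2δ : ∀ (n m : ℕ) (t : ℝ), n ≤ m → 0 ≤ t → t + b + δ + 1 ≤ (n:ℝ) →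
      dist (σ n t) (σ m t) ≤ 2 * δ := by
    intro n m t hnm ht0 htn
    have hnm' : (n:ℝ) ≤ (m:ℝ) := Nat.cast_le.mpr hnm
    have htLn : t ≤ L n := by linarith [hLlb n]
    have htLm : t ≤ L m := by linarith [hLlb m]
    obtain ⟨S2, hS2⟩ := hgs (γ n) (γ m)
    obtain ⟨_, _, h3⟩ := hhyp x0 (γ n) (γ m) _ S2 _ (hseg n) hS2 (hsegrev m)
    obtain ⟨q, hq, hpq⟩ := h3 (σ m t) ⟨t, ⟨ht0, htLm⟩, rfl⟩
    have hx0p : dist x0 (σ m t) = t := hdist0 m t ht0 htLm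
    rcases hq with hq1 | hq2
    · -- q on σ n
      obtain ⟨r, hr, rfl⟩ := hq1
      have hx0q : dist x0 (σ n r) = r := hdist0 n r hr.1 hr.2
      have habs : |t - r| ≤ δ := by
        have := abs_dist_sub_le (σ m t) (σ n r) x0
        rw [dist_comm (σ m t) x0, dist_comm (σ n r) x0] at this
        rw [hx0p, hx0q] at this
        calc |t - r| ≤ dist (σ m t) (σ n r) := this
          _ ≤ δ := hpq
      have hd1 : dist (σ n t) (σ n r) = |t - r| :=
        hσgeo n t ⟨ht0, htLn⟩ r hr
      calc dist (σ n t) (σ m t) ≤ dist (σ n t) (σ n r) + dist (σ n r) (σ m t) :=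
            dist_triangle _ _ _
        _ ≤ δ + δ := by
            rw [hd1, dist_comm]
            exact add_le_add habs hpq
        _ = 2 * δ := by ring
    · -- q on the far side: contradiction
      exfalso
      have hadd := seg_add hS2 q hq2
      have ht1 : dist x0 (γ n) ≤ dist x0 q + dist q (γ n) := dist_triangle _ _ _
      have ht2 : dist x0 (γ m) ≤ dist x0 q + dist q (γ m) := dist_triangle _ _ _
      have hnmub : dist (γ n) (γ m) ≤ (m:ℝ) - n := by
        have h := (hdir (n:ℝ) (Set.mem_Ici.mpr (Nat.cast_nonneg n)) (m:ℝ)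
          (Set.mem_Ici.mpr (Nat.cast_nonneg m))).2
        rw [abs_of_nonpos (by linarith)] at h
        linarith
      have hq_far : (n:ℝ) - b ≤ dist x0 q := by
        have hLn := hLlb n
        have hLm := hLlb m
        have hqn : dist q (γ n) = dist (γ n) q := dist_comm _ _
        rw [hLdef] at hLn hLm
        nlinarith [hadd, ht1, ht2, hnmub]
      have hq_near : dist x0 q ≤ t + δ := by
        calc dist x0 q ≤ dist x0 (σ m t) + dist (σ m t) q := dist_triangle _ _ _
          _ ≤ t + δ := by rw [hx0p]; linarith
      linarith
  -- Busemann estimate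
  have hBus : ∀ (n m : ℕ) (s t : ℝ), 0 < s → 0 ≤ t → t ≤ s → s ≤ L n → s ≤ L m →
      dist (σ n t) (σ m t) ≤ (t / s) * dist (σ n s) (σ m s) := by
    intro n m s t hs ht0 hts hsn hsm
    have hgn : IsGeodesicOn (σ n) 0 s := isGeodesicOn_sub (hσgeo n) (le_refl 0) hsn
    have hgm : IsGeodesicOn (σ m) 0 s := isGeodesicOn_sub (hσgeo m) (le_refl 0) hsm
    have hts' : t / s ∈ Set.Icc (0:ℝ) 1 :=
      ⟨div_nonneg ht0 hs.le, (div_le_one hs).mpr hts⟩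
    have := hB.2 0 s 0 s (σ n) (σ m) hs.le hs.le hgn hgm (t / s) hts'
    have harg : (1 - t/s) * 0 + (t/s) * s = t := by
      field_simp; ring
    rw [harg] at this
    have h00 : dist (σ n 0) (σ m 0) = 0 := by rw [hσ0 n, hσ0 m, dist_self]
    rw [h00] at this
    linarith [this]
  -- combined estimate
  have hEst : ∀ (n m : ℕ) (t : ℝ), n ≤ m → 0 ≤ t → t + b + δ + 1 ≤ (n:ℝ) →
      dist (σ n t) (σ m t) ≤ 2 * δ * t / ((n:ℝ) - b - δ - 1) := by
    intro n m t hnm ht0 htn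
    rcases eq_or_lt_of_le ht0 with h | h
    · rw [← h]
      have : dist (σ n 0) (σ m 0) = 0 := by rw [hσ0 n, hσ0 m, dist_self]
      rw [this]
      simp
    · set s : ℝ := (n:ℝ) - b - δ - 1 with hsdef
      have hs0 : 0 < s := by linarith
      have hts : t ≤ s := by linarith
      have hsn : s ≤ L n := by linarith [hLlb n]
      have hsm : s ≤ L m := by
        have : (n:ℝ) ≤ (m:ℝ) := Nat.cast_le.mpr hnm
        linarith [hLlb m]
      have h1 := hBus n m s t hs0 ht0 hts hsn hsm
      have h2 := h2δ n m s hnm hs0.le (by rw [hsdef]; ring_nf; linarith)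
      calc dist (σ n t) (σ m t) ≤ (t / s) * dist (σ n s) (σ m s) := h1
        _ ≤ (t / s) * (2 * δ) := by
            apply mul_le_mul_of_nonneg_left h2 (div_nonneg ht0 hs0.le)
        _ = 2 * δ * t / s := by field_simp
  -- Cauchy
  have hcauchy : ∀ t : ℝ, 0 ≤ t → CauchySeq (fun n : ℕ => σ n t) := by
    intro t ht0
    rw [Metric.cauchySeq_iff']
    intro ε hε
    set N : ℕ := ⌈t + b + δ + 2 + 2 * δ * t / ε⌉₊ with hN
    refine ⟨N, fun n hn => ?_⟩
    have hNr : t + b + δ + 2 + 2 * δ * t / ε ≤ (N:ℝ) := Nat.le_ceil _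
    have hnum : 0 ≤ 2 * δ * t / ε := by positivity
    have hNt : t + b + δ + 1 ≤ (N:ℝ) := by linarith
    have hd := hEst N n t hn ht0 hNt
    rw [dist_comm] at hd
    have hden : 0 < (N:ℝ) - b - δ - 1 := by linarith
    calc dist (σ n t) (σ N t) ≤ 2 * δ * t / ((N:ℝ) - b - δ - 1) := hd
      _ < ε := by
          rw [div_lt_iff₀ hden]
          have h1 : 2 * δ * t / ε * ε = 2 * δ * t := div_mul_cancel₀ _ hε.ne'
          nlinarith [mul_le_mul_of_nonneg_right hNr hε.le]
  have hlim : ∀ t : ℝ, 0 ≤ t → ∃ p : X, Filter.Tendsto (fun n : ℕ => σ n t)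
      Filter.atTop (nhds p) := fun t ht => cauchySeq_tendsto_of_complete (hcauchy t ht)
  have : Nonempty X := ⟨x0⟩
  choose! p hp using hlim
  -- eventually t ≤ L n
  have hev : ∀ t : ℝ, 0 ≤ t → ∀ᶠ n : ℕ in Filter.atTop, t ≤ L n := by
    intro t ht0
    filter_upwards [Filter.eventually_ge_atTop ⌈t + b⌉₊] with n hn
    have : t + b ≤ (n:ℝ) := le_trans (Nat.le_ceil _) (Nat.cast_le.mpr hn)
    linarith [hLlb n]
  refine hgb ⟨p, ?_, ?_⟩
  · intro s hs t ht
    have h1 : Filter.Tendsto (fun n : ℕ => dist (σ n s) (σ n t)) Filter.atTop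
        (nhds (dist (p s) (p t))) := (hp s hs).dist (hp t ht)
    have h2 : (fun n : ℕ => dist (σ n s) (σ n t)) =ᶠ[Filter.atTop] fun _ => |s - t| := by
      filter_upwards [hev s hs, hev t ht] with n hns hnt
      exact hσgeo n s ⟨hs, hns⟩ t ⟨ht, hnt⟩
    exact tendsto_nhds_unique h1 ((Filter.tendsto_congr' h2).mpr tendsto_const_nhds)
  · intro t ht
    refine hclosed.mem_of_tendsto (hp t ht) ?_
    filter_upwards [hev t ht] with n hn
    exact hA n t ht hn
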